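/- arXiv:quant-ph/0407023 — 5 statements merged into one kernel-verified Lean document; each statement's English description precedes it below -/
import Mathlib

section
/- Let X be a Hilbert space and let {A_n} be a sequence of bounded self-adjoint operators on X. If there exists a bounded self-adjoint operator B such that A_n ≤ A_{n+1} ≤ B for all n (in the Loewner order), then there exists a bounded self-adjoint operator A such that A_n converges strongly to A as n → ∞ and A ≤ B. -/
open Filter Topology


section Aux

variable {X : Type*} [NormedAddCommGroup X] [InnerProductSpace ℂ X] [CompleteSpace X]

local notation "⟪" x ", " y "⟫" => @inner ℂ _ _ x y

/-- Cauchy–Schwarz for a positive operator. -/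
lemma aux_pos_cauchy_schwarz (T : X →L[ℂ] X) (hT : T.IsPositive) (x y : X) :
    ‖⟪T x, y⟫‖ * ‖⟪T y, x⟫‖ ≤ RCLike.re ⟪T x, x⟫ * RCLike.re ⟪T y, y⟫ := by
  let c : PreInnerProductSpace.Core ℂ X :=
  { inner := fun u v => ⟪T u, v⟫
    conj_inner_symm := fun u v => by
      rw [inner_conj_symm]
      exact (hT.isSelfAdjoint.isSymmetric u v).symm
    re_inner_nonneg := fun u => hT.2 u
    add_left := fun u v w => by simp [inner_add_left]
    smul_left := fun u v r => by simp [inner_smul_left, mul_comm] }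
  exact @InnerProductSpace.Core.inner_mul_inner_self_le ℂ X _ _ _ c x y

lemma aux_norm_sq_le (T : X →L[ℂ] X) (hT : T.IsPositive) (x : X) :
    ‖T x‖ ^ 2 ≤ ‖T‖ * RCLike.re ⟪T x, x⟫ := by
  have h := aux_pos_cauchy_schwarz T hT x (T x)
  have h1 : ⟪T x, T x⟫ = (‖T x‖ : ℂ) ^ 2 := by
    rw [inner_self_eq_norm_sq_to_K]; norm_cast
  have h2 : ⟪T (T x), x⟫ = (‖T x‖ : ℂ) ^ 2 := by
    have hsym := hT.isSelfAdjoint.isSymmetric (T x) x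
    simp only [ContinuousLinearMap.coe_coe] at hsym
    rw [hsym, inner_self_eq_norm_sq_to_K]; norm_cast
  rw [h1, h2] at h
  have hre : 0 ≤ RCLike.re ⟪T x, x⟫ := hT.2 x
  have hnorm : ‖((‖T x‖ : ℂ) ^ 2)‖ = ‖T x‖ ^ 2 := by
    push_cast
    simp [abs_of_nonneg (sq_nonneg ‖T x‖)]
  rw [hnorm] at h
  have h3 : RCLike.re ⟪T (T x), T x⟫ ≤ ‖T‖ * ‖T x‖ ^ 2 := by
    calc RCLike.re ⟪T (T x), T x⟫ ≤ ‖T (T x)‖ * ‖T x‖ := re_inner_le_norm _ _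
    _ ≤ (‖T‖ * ‖T x‖) * ‖T x‖ := by gcongr; exact T.le_opNorm _
    _ = ‖T‖ * ‖T x‖ ^ 2 := by ring
  have h4 : ‖T x‖ ^ 2 * ‖T x‖ ^ 2 ≤ RCLike.re ⟪T x, x⟫ * (‖T‖ * ‖T x‖ ^ 2) :=
    h.trans (mul_le_mul_of_nonneg_left h3 hre)
  rcases eq_or_lt_of_le (sq_nonneg ‖T x‖) with hz | hpos
  · rw [← hz]
    exact mul_nonneg (norm_nonneg _) hre
  · nlinarith [h4, hpos]

/-- If `0 ≤ S ≤ R` then `‖S‖ ≤ ‖R‖`. -/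
lemma aux_norm_le_norm {S R : X →L[ℂ] X} (hS : S.IsPositive) (hR : R.IsPositive)
    (hSR : (R - S).IsPositive) : ‖S‖ ≤ ‖R‖ := by
  have key : ∀ x : X, ‖S x‖ ^ 2 ≤ ‖S‖ * ‖R‖ * ‖x‖ ^ 2 := by
    intro x
    calc ‖S x‖ ^ 2 ≤ ‖S‖ * RCLike.re ⟪S x, x⟫ := aux_norm_sq_le S hS x
    _ ≤ ‖S‖ * RCLike.re ⟪R x, x⟫ := by
        apply mul_le_mul_of_nonneg_left _ (norm_nonneg S)
        have := hSR.2 x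
        simp only [ContinuousLinearMap.reApplyInnerSelf_apply,
          ContinuousLinearMap.sub_apply, inner_sub_left, map_sub] at this
        linarith
    _ ≤ ‖S‖ * (‖R x‖ * ‖x‖) :=
        mul_le_mul_of_nonneg_left (re_inner_le_norm _ _) (norm_nonneg S)
    _ ≤ ‖S‖ * (‖R‖ * ‖x‖ * ‖x‖) := by gcongr; exact R.le_opNorm _
    _ = ‖S‖ * ‖R‖ * ‖x‖ ^ 2 := by ring
  have hb : ‖S‖ ≤ Real.sqrt (‖S‖ * ‖R‖) := by
    apply ContinuousLinearMap.opNorm_le_bound S (Real.sqrt_nonneg _)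
    intro x
    have h := key x
    have : ‖S x‖ ≤ Real.sqrt (‖S‖ * ‖R‖ * ‖x‖ ^ 2) := by
      rw [show ‖S x‖ = Real.sqrt (‖S x‖ ^ 2) by rw [Real.sqrt_sq (norm_nonneg _)]]
      exact Real.sqrt_le_sqrt h
    rwa [Real.sqrt_mul (by positivity), Real.sqrt_sq (norm_nonneg x)] at this
  have h2 : ‖S‖ ^ 2 ≤ ‖S‖ * ‖R‖ := by
    have := Real.sq_sqrt (by positivity : (0:ℝ) ≤ ‖S‖ * ‖R‖)
    nlinarith [hb, Real.sqrt_nonneg (‖S‖ * ‖R‖), norm_nonneg S]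
  rcases eq_or_lt_of_le (norm_nonneg S) with hz | hpos
  · rw [← hz]; exact norm_nonneg R
  · nlinarith [h2]

end Aux
/-- A monotone sequence of bounded self-adjoint operators on a Hilbert
space that is bounded above by a self-adjoint operator `B` (in the Loewner order)
converges strongly to a bounded self-adjoint operator `A` with `A ≤ B`. -/
theorem monotone_bounded_operator_sequence_strong_limit
    (X : Type*) [NormedAddCommGroup X] [InnerProductSpace ℂ X] [CompleteSpace X]
    (A : ℕ → X →L[ℂ] X) (B : X →L[ℂ] X)
    (hA : ∀ n, IsSelfAdjoint (A n)) (hB : IsSelfAdjoint B)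
    (hmono : ∀ n, (A (n + 1) - A n).IsPositive)
    (hbound : ∀ n, (B - A n).IsPositive) :
    ∃ L : X →L[ℂ] X, IsSelfAdjoint L ∧ (B - L).IsPositive ∧
      ∀ x : X, Tendsto (fun n => A n x) atTop (𝓝 (L x)) := by
  -- positivity of differences
  have hposdiff : ∀ n m, n ≤ m → (A m - A n).IsPositive := by
    intro n m hnm
    induction m, hnm using Nat.le_induction with
    | base => rw [sub_self]; exact ContinuousLinearMap.isPositive_zero
    | succ m hm ih =>
      have e : A (m + 1) - A n = (A (m + 1) - A m) + (A m - A n) := by abel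
      rw [e]; exact (hmono m).add ih
  set C := ‖B - A 0‖ with hCdef
  have hC0 : (0:ℝ) ≤ C := norm_nonneg _
  have hBAn : ∀ n, ‖B - A n‖ ≤ C := by
    intro n
    refine aux_norm_le_norm (hbound n) (hbound 0) ?_
    have e : (B - A 0) - (B - A n) = A n - A 0 := by abel
    rw [e]; exact hposdiff 0 n (Nat.zero_le n)
  have hAdiff : ∀ n m, n ≤ m → ‖A m - A n‖ ≤ 2 * C := by
    intro n m h
    have e : A m - A n = (B - A n) - (B - A m) := by abel
    rw [e]
    calc ‖(B - A n) - (B - A m)‖ ≤ ‖B - A n‖ + ‖B - A m‖ := norm_sub_le _ _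
    _ ≤ 2 * C := by have h1 := hBAn n; have h2 := hBAn m; linarith
  -- monotone bounded scalar sequences
  have hamono : ∀ (x : X), Monotone (fun n => RCLike.re (inner ℂ (A n x) x : ℂ)) := by
    intro x
    apply monotone_nat_of_le_succ
    intro n
    have h := (hmono n).2 x
    simp only [ContinuousLinearMap.reApplyInnerSelf_apply, ContinuousLinearMap.sub_apply,
      inner_sub_left, map_sub] at h
    linarith
  have habdd : ∀ (x : X) (n : ℕ),
      RCLike.re (inner ℂ (A n x) x : ℂ) ≤ RCLike.re (inner ℂ (B x) x : ℂ) := by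
    intro x n
    have h := (hbound n).2 x
    simp only [ContinuousLinearMap.reApplyInnerSelf_apply, ContinuousLinearMap.sub_apply,
      inner_sub_left, map_sub] at h
    linarith
  -- Cauchy sequences
  have hcauchy : ∀ x : X, CauchySeq (fun n => A n x) := by
    intro x
    set a : ℕ → ℝ := fun n => RCLike.re (inner ℂ (A n x) x : ℂ) with hadef
    have haconv : CauchySeq a := by
      refine (tendsto_atTop_ciSup (hamono x) ?_).cauchySeq
      exact ⟨RCLike.re (inner ℂ (B x) x : ℂ), by rintro y ⟨n, rfl⟩; exact habdd x n⟩
    have est : ∀ n m, n ≤ m → ‖A m x - A n x‖ ^ 2 ≤ (2 * C + 1) * (a m - a n) := by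
      intro n m h
      have h1 := aux_norm_sq_le _ (hposdiff n m h) x
      have h2 : RCLike.re (inner ℂ ((A m - A n) x) x : ℂ) = a m - a n := by
        simp [hadef, ContinuousLinearMap.sub_apply, inner_sub_left]
      have h3 : 0 ≤ a m - a n := by
        rw [← h2]
        have := (hposdiff n m h).2 x
        simpa [ContinuousLinearMap.reApplyInnerSelf_apply, inner_sub_left] using this
      rw [h2] at h1
      calc ‖A m x - A n x‖ ^ 2 = ‖(A m - A n) x‖ ^ 2 := by
            rw [ContinuousLinearMap.sub_apply]
      _ ≤ ‖A m - A n‖ * (a m - a n) := h1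
      _ ≤ (2 * C + 1) * (a m - a n) :=
          mul_le_mul_of_nonneg_right ((hAdiff n m h).trans (by linarith)) h3
    rw [Metric.cauchySeq_iff]
    intro ε hε
    have hδ : (0:ℝ) < ε ^ 2 / (2 * C + 1) := by positivity
    obtain ⟨N, hN⟩ := Metric.cauchySeq_iff.mp haconv (ε ^ 2 / (2 * C + 1)) hδ
    have key : ∀ p q, N ≤ p → N ≤ q → q ≤ p → dist (A p x) (A q x) < ε := by
      intro p q hp hq hqp
      rw [dist_eq_norm]
      have h1 := est q p hqp
      have h2 := hN p hp q hq
      rw [Real.dist_eq] at h2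
      have h3 : a p - a q ≤ |a p - a q| := le_abs_self _
      have h4 : ‖A p x - A q x‖ ^ 2 < ε ^ 2 := by
        have hlt : (2 * C + 1) * |a p - a q| < (2 * C + 1) * (ε ^ 2 / (2 * C + 1)) :=
          mul_lt_mul_of_pos_left h2 (by linarith)
        have he : (2 * C + 1) * (ε ^ 2 / (2 * C + 1)) = ε ^ 2 := by
          field_simp
        nlinarith [h1, h3, hlt, he]
      exact lt_of_pow_lt_pow_left₀ 2 (le_of_lt hε) h4
    refine ⟨N, fun m hm n hn => ?_⟩
    rcases le_total n m with h | h
    · exact key m n hm hn h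
    · rw [dist_comm]; exact key n m hn hm h
  have hlim : ∀ x : X, ∃ y : X, Tendsto (fun n => A n x) atTop (𝓝 y) := fun x =>
    cauchySeq_tendsto_of_complete (hcauchy x)
  choose f hf using hlim
  -- uniform norm bound
  have hMn : ∀ n, ‖A n‖ ≤ ‖A 0‖ + 2 * C := by
    intro n
    have e : A n = A 0 + (A n - A 0) := by abel
    rw [e]
    calc ‖A 0 + (A n - A 0)‖ ≤ ‖A 0‖ + ‖A n - A 0‖ := norm_add_le _ _
    _ ≤ ‖A 0‖ + 2 * C := by have := hAdiff 0 n (Nat.zero_le n); linarith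
  have hfb : ∀ x : X, ‖f x‖ ≤ (‖A 0‖ + 2 * C) * ‖x‖ := by
    intro x
    refine le_of_tendsto (hf x).norm (Eventually.of_forall fun n => ?_)
    calc ‖A n x‖ ≤ ‖A n‖ * ‖x‖ := (A n).le_opNorm x
    _ ≤ (‖A 0‖ + 2 * C) * ‖x‖ := mul_le_mul_of_nonneg_right (hMn n) (norm_nonneg x)
  let L : X →L[ℂ] X := LinearMap.mkContinuous
    { toFun := f
      map_add' := fun x y => by
        refine tendsto_nhds_unique (hf (x + y)) ?_
        simp only [map_add]
        exact (hf x).add (hf y)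
      map_smul' := fun c x => by
        refine tendsto_nhds_unique (hf (c • x)) ?_
        simp only [map_smul, RingHom.id_apply]
        exact (hf x).const_smul c } (‖A 0‖ + 2 * C) hfb
  have hLapp : ∀ x, L x = f x := fun x => rfl
  have hLsa : IsSelfAdjoint L := by
    rw [ContinuousLinearMap.isSelfAdjoint_iff_isSymmetric]
    intro x y
    have t1 : Tendsto (fun n => (inner ℂ (A n x) y : ℂ)) atTop (𝓝 (inner ℂ (L x) y)) := by
      rw [hLapp]; exact (hf x).inner tendsto_const_nhds
    have t2 : Tendsto (fun n => (inner ℂ x (A n y) : ℂ)) atTop (𝓝 (inner ℂ x (L y))) := by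
      rw [hLapp]; exact tendsto_const_nhds.inner (hf y)
    have he : (fun n => (inner ℂ (A n x) y : ℂ)) = fun n => (inner ℂ x (A n y) : ℂ) := by
      funext n
      have hs := (hA n).isSymmetric x y
      simpa using hs
    rw [he] at t1
    have := tendsto_nhds_unique t1 t2
    simpa using this
  have hLre : ∀ x : X, Tendsto (fun n => RCLike.re (inner ℂ (A n x) x : ℂ)) atTop
      (𝓝 (RCLike.re (inner ℂ (L x) x : ℂ))) := by
    intro x
    have : Tendsto (fun n => (inner ℂ (A n x) x : ℂ)) atTop (𝓝 (inner ℂ (L x) x)) := by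
      rw [hLapp]; exact (hf x).inner tendsto_const_nhds
    exact (RCLike.continuous_re.tendsto _).comp this
  refine ⟨L, hLsa, ⟨(hB.sub hLsa).isSymmetric, fun x => ?_⟩, fun x => by rw [hLapp]; exact hf x⟩
  have hle : RCLike.re (inner ℂ (L x) x : ℂ) ≤ RCLike.re (inner ℂ (B x) x : ℂ) :=
    le_of_tendsto (hLre x) (Eventually.of_forall fun n => habdd x n)
  simp only [ContinuousLinearMap.reApplyInnerSelf_apply, ContinuousLinearMap.sub_apply,
    inner_sub_left, map_sub]
  linarith
end

section
/- Let T be a bounded self-adjoint operator on a Hilbert space X and let {e_i} be an orthonormal basis. Then T is positive if and only if for every finite sequence ν_1 < ... < ν_m of positive integers, the determinant of the m×m matrix with (j,k) entry ⟨T e_{ν_j}, e_{ν_k}⟩ is nonnegative. -/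
open ComplexOrder

section Aux

open Matrix

private lemma psd_det_nonneg {n : ℕ} {M : Matrix (Fin n) (Fin n) ℂ} (hM : M.PosSemidef) :
    0 ≤ M.det := by
  rw [hM.1.det_eq_prod_eigenvalues]
  refine Finset.prod_nonneg fun i _ => ?_
  have := hM.eigenvalues_nonneg i
  exact Complex.zero_le_real.mpr this

private lemma det_add_smul_one (n : ℕ) (A : Matrix (Fin n) (Fin n) ℂ) (s : ℂ) :
    (A + s • (1 : Matrix (Fin n) (Fin n) ℂ)).det =
      ∑ S : Finset (Fin n),
        (A.submatrix (fun i : {x // x ∈ S} => (i : Fin n))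
            (fun i : {x // x ∈ S} => (i : Fin n))).det
          * s ^ (Fintype.card {x // ¬ x ∈ S}) := by
  have h1 : (A + s • (1 : Matrix (Fin n) (Fin n) ℂ)).det
      = ∑ S : Finset (Fin n),
          (Matrix.of (S.piecewise A (s • (1 : Matrix (Fin n) (Fin n) ℂ)))).det := by
    have := (Matrix.detRowAlternating :
      (Fin n → ℂ) [⋀^Fin n]→ₗ[ℂ] ℂ).toMultilinearMap.map_add_univ
      (fun i => A i) (fun i => (s • (1 : Matrix (Fin n) (Fin n) ℂ)) i)
    exact this
  rw [h1]
  refine Finset.sum_congr rfl fun S _ => ?_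
  classical
  let σ : {x // x ∈ S} ⊕ {x // ¬ x ∈ S} ≃ Fin n := Equiv.sumCompl (· ∈ S)
  rw [← Matrix.det_submatrix_equiv_self σ]
  have hblock : (Matrix.of (S.piecewise A (s • (1 : Matrix (Fin n) (Fin n) ℂ)))).submatrix σ σ
      = Matrix.fromBlocks
          (A.submatrix (fun i : {x // x ∈ S} => (i : Fin n)) (fun i : {x // x ∈ S} => (i : Fin n)))
          (A.submatrix (fun i : {x // x ∈ S} => (i : Fin n)) (fun i : {x // ¬ x ∈ S} => (i : Fin n)))
          0 (s • 1) := by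
    ext i j
    cases i with
    | inl i =>
      cases j with
      | inl j => simp [σ, Finset.piecewise, i.2]
      | inr j => simp [σ, Finset.piecewise, i.2]
    | inr i =>
      cases j with
      | inl j =>
        have : (i : Fin n) ≠ (j : Fin n) := by
          intro h
          exact i.2 (h ▸ j.2)
        simp [σ, Finset.piecewise, i.2, Matrix.one_apply, this]
      | inr j =>
        have : ((i : Fin n) = (j : Fin n)) ↔ i = j := Subtype.coe_injective.eq_iff
        simp [σ, Finset.piecewise, i.2, Matrix.one_apply, this,
          Matrix.smul_apply]
  rw [hblock, Matrix.det_fromBlocks_zero₂₁]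
  congr 1
  rw [Matrix.det_smul, Matrix.det_one, mul_one]

private lemma posSemidef_of_minors (n : ℕ) (A : Matrix (Fin n) (Fin n) ℂ) (hA : A.IsHermitian)
    (h : ∀ S : Finset (Fin n),
      0 ≤ (A.submatrix (fun i : {x // x ∈ S} => (i : Fin n))
            (fun i : {x // x ∈ S} => (i : Fin n))).det) :
    A.PosSemidef := by
  refine hA.posSemidef_iff_eigenvalues_nonneg.mpr (Pi.le_def.mpr (?_ : ∀ i, 0 ≤ hA.eigenvalues i))
  by_contra hc
  push_neg at hc
  obtain ⟨i, hi⟩ := hc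
  set s : ℝ := -hA.eigenvalues i with hs
  have hspos : 0 < s := by simp [hs]; linarith
  have hdet0 : (A + (s : ℂ) • (1 : Matrix (Fin n) (Fin n) ℂ)).det = 0 := by
    set U : Matrix (Fin n) (Fin n) ℂ := (hA.eigenvectorUnitary : Matrix (Fin n) (Fin n) ℂ)
    have hU : U * star U = 1 := Matrix.mem_unitaryGroup_iff.mp hA.eigenvectorUnitary.2
    have hU' : star U * U = 1 := Matrix.mem_unitaryGroup_iff'.mp hA.eigenvectorUnitary.2
    have h1 : A + (s : ℂ) • 1
        = U * (Matrix.diagonal (fun j => ((hA.eigenvalues j : ℂ) + s)) ) * star U := by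
      have hsp : A = U * Matrix.diagonal (RCLike.ofReal ∘ hA.eigenvalues) * star U :=
        hA.spectral_theorem
      have h2 : (s : ℂ) • (1 : Matrix (Fin n) (Fin n) ℂ) = U * ((s:ℂ) • 1) * star U := by
        rw [Matrix.mul_smul, Matrix.smul_mul, mul_one, hU]
      calc A + (s : ℂ) • 1
          = U * Matrix.diagonal (RCLike.ofReal ∘ hA.eigenvalues) * star U
            + U * ((s:ℂ) • 1) * star U := by rw [← hsp, ← h2]
        _ = U * (Matrix.diagonal (RCLike.ofReal ∘ hA.eigenvalues) + (s:ℂ) • 1) * star U := by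
            rw [Matrix.mul_add, Matrix.add_mul]
        _ = _ := by
            congr 1
            rw [Matrix.smul_one_eq_diagonal, Matrix.diagonal_add]
            rfl
    rw [h1, Matrix.det_mul, Matrix.det_mul, mul_comm, ← mul_assoc, ← Matrix.det_mul, hU']
    rw [Matrix.det_one, one_mul, Matrix.det_diagonal]
    refine Finset.prod_eq_zero (Finset.mem_univ i) ?_
    simp [hs]
  have hdetpos : 0 < (A + (s : ℂ) • (1 : Matrix (Fin n) (Fin n) ℂ)).det := by
    rw [det_add_smul_one]
    have hsc : (0 : ℂ) < (s : ℂ) := by exact_mod_cast hspos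
    refine Finset.sum_pos' (fun S _ => mul_nonneg (h S) (pow_nonneg hsc.le _)) ?_
    refine ⟨∅, Finset.mem_univ _, ?_⟩
    have : (A.submatrix (fun i : {x // x ∈ (∅ : Finset (Fin n))} => (i : Fin n))
        (fun i : {x // x ∈ (∅ : Finset (Fin n))} => (i : Fin n))).det = 1 :=
      Matrix.det_isEmpty
    rw [this, one_mul]
    exact pow_pos hsc _
  exact absurd hdet0 (ne_of_gt hdetpos)

variable {X : Type*} [NormedAddCommGroup X] [InnerProductSpace ℂ X] [CompleteSpace X]

private lemma quad_form_eq (e : HilbertBasis ℕ ℂ X) (T : X →L[ℂ] X) (m : ℕ) (ν : Fin m → ℕ)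
    (v : Fin m → ℂ) :
    dotProduct (star v)
      ((Matrix.of fun j k : Fin m => (inner ℂ (e (ν j)) (T (e (ν k))) : ℂ)) *ᵥ v)
      = (inner ℂ (∑ j, v j • e (ν j)) (T (∑ j, v j • e (ν j))) : ℂ) := by
  simp only [map_sum, ContinuousLinearMap.map_smul, inner_sum, sum_inner, inner_smul_left,
    inner_smul_right, dotProduct, Matrix.mulVec, Pi.star_apply, Matrix.of_apply,
    RCLike.star_def, Finset.mul_sum]
  rw [Finset.sum_comm]
  refine Finset.sum_congr rfl fun j _ => Finset.sum_congr rfl fun k _ => ?_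
  ring

private lemma hermitian_entries (e : HilbertBasis ℕ ℂ X) (T : X →L[ℂ] X) (hT : IsSelfAdjoint T)
    (m : ℕ) (ν : Fin m → ℕ) :
    (Matrix.of fun j k : Fin m => (inner ℂ (e (ν j)) (T (e (ν k))) : ℂ)).IsHermitian := by
  have hsym := (ContinuousLinearMap.isSelfAdjoint_iff_isSymmetric).mp hT
  ext j k
  simp only [Matrix.conjTranspose_apply, Matrix.of_apply, RCLike.star_def, inner_conj_symm]
  exact hsym _ _

end Aux

/-- A bounded self-adjoint operator `T` on a separable Hilbert space with
orthonormal basis `{e_i}` is positive iff every principal minor, i.e. the determinant of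
the matrix `(⟨e (ν j), T (e (ν k))⟩)` for any strictly increasing finite sequence `ν`,
is nonnegative. -/
theorem isPositive_iff_principal_minors_nonneg
    (X : Type*) [NormedAddCommGroup X] [InnerProductSpace ℂ X] [CompleteSpace X]
    (e : HilbertBasis ℕ ℂ X) (T : X →L[ℂ] X) (hT : IsSelfAdjoint T) :
    T.IsPositive ↔
      ∀ (m : ℕ) (ν : Fin m → ℕ), StrictMono ν →
        0 ≤ (Matrix.of fun j k : Fin m => (inner ℂ (e (ν j)) (T (e (ν k))) : ℂ)).det := by
  have hsym := (ContinuousLinearMap.isSelfAdjoint_iff_isSymmetric).mp hT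
  constructor
  · -- forward
    intro hpos m ν _
    refine psd_det_nonneg (Matrix.posSemidef_iff_dotProduct_mulVec.mpr ⟨hermitian_entries e T hT m ν, fun v => ?_⟩)
    rw [quad_form_eq]
    set y := ∑ j, v j • e (ν j)
    have h1 := (T.isPositive_iff_complex).mp hpos y
    calc (0:ℂ) ≤ (RCLike.re (inner ℂ (T y) y : ℂ) : ℂ) := by
          exact Complex.zero_le_real.mpr h1.2
      _ = (inner ℂ (T y) y : ℂ) := h1.1
      _ = (inner ℂ y (T y) : ℂ) := (hsym y y)
  · -- backward
    intro h
    refine ⟨hsym, fun x => ?_⟩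
    rw [ContinuousLinearMap.reApplyInnerSelf_apply]
    -- partial sums
    set c : ℕ → ℂ := fun i => e.repr x i with hc
    set xn : ℕ → X := fun n => ∑ i ∈ Finset.range n, c i • e i with hxn
    have htend : Filter.Tendsto xn Filter.atTop (nhds x) :=
      (e.hasSum_repr x).tendsto_sum_nat
    -- each partial quadratic form is nonneg
    have hA : ∀ n : ℕ,
        (Matrix.of fun j k : Fin n => (inner ℂ (e ((j:ℕ))) (T (e ((k:ℕ)))) : ℂ)).PosSemidef := by
      intro n
      refine posSemidef_of_minors n _ (hermitian_entries e T hT n _) fun S => ?_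
      classical
      set σ : Fin S.card ≃ {x // x ∈ S} := (S.orderIsoOfFin rfl).toEquiv
      have hdet := Matrix.det_submatrix_equiv_self σ
        ((Matrix.of fun j k : Fin n => (inner ℂ (e ((j:ℕ))) (T (e ((k:ℕ)))) : ℂ)).submatrix
          (fun i : {x // x ∈ S} => (i : Fin n)) (fun i : {x // x ∈ S} => (i : Fin n)))
      rw [← hdet]
      have := h S.card (fun j => ((S.orderEmbOfFin rfl j : Fin n) : ℕ))
        ((Fin.val_strictMono).comp (S.orderEmbOfFin rfl).strictMono)
      have heq : ((Matrix.of fun j k : Fin n => (inner ℂ (e ((j:ℕ))) (T (e ((k:ℕ)))) : ℂ)).submatrix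
            (fun i : {x // x ∈ S} => (i : Fin n)) (fun i : {x // x ∈ S} => (i : Fin n))).submatrix σ σ
          = Matrix.of fun j k : Fin S.card =>
              (inner ℂ (e ((S.orderEmbOfFin rfl j : Fin n) : ℕ))
                (T (e ((S.orderEmbOfFin rfl k : Fin n) : ℕ))) : ℂ) := by
        ext j k
        simp [σ, Matrix.submatrix_apply, Finset.coe_orderIsoOfFin_apply]
      rw [heq]
      exact this
    have hnn : ∀ n : ℕ, 0 ≤ RCLike.re (inner ℂ (xn n) (T (xn n)) : ℂ) := by
      intro n
      have hq := (Matrix.posSemidef_iff_dotProduct_mulVec.mp (hA n)).2 (fun j : Fin n => c (j : ℕ))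
      rw [quad_form_eq e T n (fun j : Fin n => (j : ℕ)) (fun j : Fin n => c (j : ℕ))] at hq
      have hxe : xn n = ∑ j : Fin n, c (j : ℕ) • e ((j : ℕ)) := by
        rw [hxn]
        exact Finset.sum_range fun i => c i • e i
      rw [← hxe] at hq
      exact (Complex.le_def.mp hq).1
    have hcont : Filter.Tendsto (fun n => RCLike.re (inner ℂ (xn n) (T (xn n)) : ℂ))
        Filter.atTop (nhds (RCLike.re (inner ℂ x (T x) : ℂ))) := by
      have h2 : Filter.Tendsto (fun n => (inner ℂ (xn n) (T (xn n)) : ℂ))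
          Filter.atTop (nhds (inner ℂ x (T x) : ℂ)) :=
        htend.inner (T.continuous.continuousAt.tendsto.comp htend)
      exact (Complex.continuous_re.continuousAt.tendsto.comp h2)
    have hfinal : 0 ≤ RCLike.re (inner ℂ x (T x) : ℂ) :=
      ge_of_tendsto hcont (Filter.Eventually.of_forall hnn)
    calc (0:ℝ) ≤ RCLike.re (inner ℂ x (T x) : ℂ) := hfinal
      _ = RCLike.re (inner ℂ (T x) x : ℂ) := inner_re_symm _ _
end

section
/- Let A be the 2×2 Hermitian matrix with entries A₁₁ = 2/3, A₁₂ = A₂₁ = √2/3, A₂₂ = 1/3. Then A is positive semi-definite with rank 1, and there does not exist a nonzero 2×2 Hermitian matrix B all of whose entries have rational real and imaginary parts such that 0 ≤ B ≤ A in the Loewner order. -/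
open ComplexOrder
open Matrix

/-- A complex number is Gaussian rational if its real and imaginary parts are rational. -/
def GaussianRational (z : ℂ) : Prop := ∃ q r : ℚ, z = (q : ℂ) + (r : ℂ) * Complex.I

private noncomputable def Mrow : Matrix (Fin 1) (Fin 2) ℂ :=
  Matrix.of ![![((Real.sqrt 2 / Real.sqrt 3 : ℝ) : ℂ), (((Real.sqrt 3)⁻¹ : ℝ) : ℂ)]]

private lemma hAM :
    (Matrix.of ![![((2 / 3 : ℝ) : ℂ), ((Real.sqrt 2 / 3 : ℝ) : ℂ)],
                 ![((Real.sqrt 2 / 3 : ℝ) : ℂ), ((1 / 3 : ℝ) : ℂ)]]) = Mrowᴴ * Mrow := by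
  have h3 : (Real.sqrt 3 : ℂ) * Real.sqrt 3 = 3 := by
    rw [← Complex.ofReal_mul, Real.mul_self_sqrt (by norm_num)]; norm_num
  have h2 : (Real.sqrt 2 : ℂ) * Real.sqrt 2 = 2 := by
    rw [← Complex.ofReal_mul, Real.mul_self_sqrt (by norm_num)]; norm_num
  have h3ne : (Real.sqrt 3 : ℂ) ≠ 0 := by
    simpa using (Real.sqrt_ne_zero'.mpr (by norm_num : (0:ℝ) < 3))
  ext i j
  fin_cases i <;> fin_cases j <;>
    simp [Mrow, Matrix.mul_apply, Fin.sum_univ_one, Matrix.conjTranspose_apply] <;>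
    field_simp
  · linear_combination 2 * h3 - 3 * h2
  · linear_combination h3
  · linear_combination h3
  · linear_combination h3

private lemma hMrank : Mrow.rank = 1 := by
  have hle : Mrow.rank ≤ 1 := by
    simpa using Mrow.rank_le_card_height
  have hne : Mrow ≠ 0 := by
    intro h
    have h2 : Mrow 0 1 = 0 := by rw [h]; rfl
    have : ((Real.sqrt 3)⁻¹ : ℝ) = 0 := by
      simpa [Mrow] using h2
    have h3ne : Real.sqrt 3 ≠ 0 := by
      simpa using (Real.sqrt_ne_zero'.mpr (by norm_num : (0:ℝ) < 3))
    exact h3ne (inv_eq_zero.mp this)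
  have hpos : 0 < Mrow.rank := by
    rw [Matrix.rank]
    rw [Module.finrank_pos_iff_exists_ne_zero]
    obtain ⟨i, j, hij⟩ : ∃ i j, Mrow i j ≠ 0 := by
      by_contra h
      push_neg at h
      exact hne (by ext i j; simpa using h i j)
    refine ⟨⟨Mrow *ᵥ Pi.single j 1, LinearMap.mem_range_self _ _⟩, ?_⟩
    intro h
    apply hij
    have h' : Mrow *ᵥ Pi.single j 1 = 0 := by
      simpa [Submodule.mk_eq_zero] using h
    have := congrFun h' i
    simpa [Matrix.mulVec_single] using this
  omega

private lemma aux_rat (q q' : ℚ) (h : (q' : ℝ) = Real.sqrt 2 * q) : q = 0 := by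
  by_contra hq
  have : Irrational ((q : ℝ) * Real.sqrt 2) := irrational_sqrt_two.ratCast_mul hq
  rw [mul_comm, ← h] at this
  exact (Rat.not_irrational q') this

/-- The matrix `A = [[2/3, √2/3], [√2/3, 1/3]]` is positive semi-definite
of rank one, and no nonzero Hermitian matrix `B` with Gaussian-rational entries satisfies
`0 ≤ B ≤ A` in the Loewner order. -/
theorem no_rational_matrix_below_rank_one_example :
    ∀ A : Matrix (Fin 2) (Fin 2) ℂ,
      A = Matrix.of ![![((2 / 3 : ℝ) : ℂ), ((Real.sqrt 2 / 3 : ℝ) : ℂ)],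
                      ![((Real.sqrt 2 / 3 : ℝ) : ℂ), ((1 / 3 : ℝ) : ℂ)]] →
      A.PosSemidef ∧ A.rank = 1 ∧
        ¬∃ B : Matrix (Fin 2) (Fin 2) ℂ, B ≠ 0 ∧ B.IsHermitian ∧
          (∀ i j, GaussianRational (B i j)) ∧ B.PosSemidef ∧ (A - B).PosSemidef := by
  intro A hA
  subst hA
  rw [hAM]
  refine ⟨Matrix.posSemidef_conjTranspose_mul_self Mrow, ?_, ?_⟩
  · rw [Matrix.rank_conjTranspose_mul_self]; exact hMrank
  · rw [← hAM]
    rintro ⟨B, hB0, hH, hGR, hBpsd, hABpsd⟩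
    set A : Matrix (Fin 2) (Fin 2) ℂ :=
      Matrix.of ![![((2 / 3 : ℝ) : ℂ), ((Real.sqrt 2 / 3 : ℝ) : ℂ)],
                  ![((Real.sqrt 2 / 3 : ℝ) : ℂ), ((1 / 3 : ℝ) : ℂ)]] with hAdef
    set u : Fin 2 → ℂ := ![1, -((Real.sqrt 2 : ℝ) : ℂ)] with hu
    have h2 : (Real.sqrt 2 : ℂ) * Real.sqrt 2 = 2 := by
      rw [← Complex.ofReal_mul, Real.mul_self_sqrt (by norm_num)]; norm_num
    have hAu : A *ᵥ u = 0 := by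
      ext i
      fin_cases i <;>
        simp [hAdef, hu, Matrix.mulVec, dotProduct, Fin.sum_univ_two] <;>
        field_simp
      all_goals first
        | linear_combination h2
        | linear_combination (-2 : ℂ) * h2
        | linear_combination (2 : ℂ) * h2
        | linear_combination -h2
        | ring
    have hform : star u ⬝ᵥ B *ᵥ u = 0 := by
      have h1 : (0 : ℂ) ≤ star u ⬝ᵥ B *ᵥ u := hBpsd.dotProduct_mulVec_nonneg u
      have h2' : (0 : ℂ) ≤ star u ⬝ᵥ (A - B) *ᵥ u := hABpsd.dotProduct_mulVec_nonneg u
      rw [Matrix.sub_mulVec, dotProduct_sub, hAu, dotProduct_zero,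
        zero_sub] at h2'
      exact le_antisymm (neg_nonneg.mp h2') h1
    have hBu : B *ᵥ u = 0 := (hBpsd.dotProduct_mulVec_zero_iff u).mp hform
    -- entries
    have h00 : B 0 0 = (Real.sqrt 2 : ℂ) * B 0 1 := by
      have := congrFun hBu 0
      simp [Matrix.mulVec, dotProduct, Fin.sum_univ_two, hu] at this
      linear_combination this
    have h10 : B 1 0 = (Real.sqrt 2 : ℂ) * B 1 1 := by
      have := congrFun hBu 1
      simp [Matrix.mulVec, dotProduct, Fin.sum_univ_two, hu] at this
      linear_combination this
    -- Gaussian rationality kills B 0 1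
    have key : ∀ i j i' j', B i' j' = (Real.sqrt 2 : ℂ) * B i j → B i j = 0 := by
      intro i j i' j' h
      obtain ⟨q, r, hqr⟩ := hGR i j
      obtain ⟨q', r', hqr'⟩ := hGR i' j'
      rw [hqr, hqr'] at h
      have hre := congrArg Complex.re h
      have him := congrArg Complex.im h
      simp [Complex.ofReal_mul] at hre him
      have hq : q = 0 := aux_rat q q' (by exact_mod_cast hre)
      have hr : r = 0 := aux_rat r r' (by exact_mod_cast him)
      rw [hqr, hq, hr]; simp
    have hB01 : B 0 1 = 0 := key 0 1 0 0 h00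
    have hB11 : B 1 1 = 0 := key 1 1 1 0 h10
    have hB00 : B 0 0 = 0 := by rw [h00, hB01, mul_zero]
    have hB10 : B 1 0 = 0 := by
      have := hH.apply 0 1
      rw [hB01] at this
      exact star_eq_zero.mp this
    apply hB0
    ext i j
    fin_cases i <;> fin_cases j <;> simp [hB00, hB01, hB10, hB11]
end

section
/- Let S and T be bounded self-adjoint operators on a Hilbert space X with aI ≤ S for some real a > 0 and S ≤ T. Then log S and log T (defined by continuous functional calculus) are bounded self-adjoint operators and log S ≤ log T. -/
set_option linter.unusedSectionVars false
set_option linter.unusedVariables false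

open scoped NNReal ENNReal


section CStar

variable {A : Type*} [CStarAlgebra A] [Nontrivial A] [PartialOrder A] [StarOrderedRing A]

lemma my_spectralRadius_mul_comm (a b : A) :
    spectralRadius ℝ (a * b) = spectralRadius ℝ (b * a) := by
  have key : ∀ x y : A, spectralRadius ℝ (x * y) ≤ spectralRadius ℝ (y * x) := by
    intro x y
    rw [spectralRadius, spectralRadius]
    refine iSup₂_le fun k hk => ?_
    rcases eq_or_ne k 0 with h | h
    · simp [h]
    · have hmem : k ∈ spectrum ℝ (y * x) \ {0} := by
        rw [← spectrum.nonzero_mul_comm]; exact ⟨hk, h⟩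
      exact le_iSup₂ (f := fun k (_ : k ∈ spectrum ℝ (y * x)) => (‖k‖₊ : ℝ≥0∞)) k hmem.1
  exact le_antisymm (key a b) (key b a)

lemma my_isUnit_sqrt {b : A} (hb : IsUnit b) (hb0 : 0 ≤ b) : IsUnit (CFC.sqrt b) := by
  lift b to Aˣ using hb
  have hmul : CFC.sqrt (b : A) * CFC.sqrt (b : A) = (b : A) := CFC.sqrt_mul_sqrt_self _ hb0
  have hcomm : Commute (CFC.sqrt (b : A)) (b : A) := by
    conv_rhs => rw [← hmul]
    exact (Commute.refl (CFC.sqrt (b : A))).mul_right (Commute.refl _)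
  have hcomm' : Commute (CFC.sqrt (b : A)) (↑b⁻¹ : A) := hcomm.units_inv_right
  refine ⟨⟨CFC.sqrt (b : A), CFC.sqrt (b : A) * ↑b⁻¹, ?_, ?_⟩, rfl⟩
  · rw [← mul_assoc, hmul]; exact b.mul_inv
  · rw [hcomm'.eq, mul_assoc, hmul]; exact b.inv_mul

lemma my_sqrt_le_sqrt {a b : A} (ha : 0 ≤ a) (hb : IsUnit b) (hab : a ≤ b) :
    CFC.sqrt a ≤ CFC.sqrt b := by
  have hb0 : 0 ≤ b := ha.trans hab
  lift b to Aˣ using hb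
  obtain ⟨s, hs⟩ := my_isUnit_sqrt b.isUnit hb0
  have hs0 : 0 ≤ (s : A) := hs ▸ CFC.sqrt_nonneg _
  have hsinv0 : 0 ≤ (↑s⁻¹ : A) := by
    rw [← CFC.rpow_neg_one_eq_inv s hs0]; exact CFC.rpow_nonneg
  have hss : s * s = b := by
    ext
    rw [Units.val_mul, hs, CFC.sqrt_mul_sqrt_self _ hb0]
  have hsqrt_inv : CFC.sqrt (↑b⁻¹ : A) = (↑s⁻¹ : A) := by
    refine CFC.sqrt_unique ?_ hsinv0
    rw [← Units.val_mul, ← mul_inv_rev, hss]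
  have key1 : ‖CFC.sqrt a * (↑s⁻¹ : A)‖ ≤ 1 := by
    rw [← hsqrt_inv]
    exact (le_iff_norm_sqrt_mul_sqrt_inv ha hb0).mp hab
  rw [← hs]
  refine (le_iff_norm_sqrt_mul_sqrt_inv (b := s) (CFC.sqrt_nonneg _) hs0).mpr ?_
  set p := CFC.sqrt (CFC.sqrt a) with hp_def
  set q := CFC.sqrt (↑s⁻¹ : A) with hq_def
  have hp0 : 0 ≤ p := CFC.sqrt_nonneg _
  have hq0 : 0 ≤ q := CFC.sqrt_nonneg _
  have hpp : p * p = CFC.sqrt a := CFC.sqrt_mul_sqrt_self _ (CFC.sqrt_nonneg _)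
  have hqq : q * q = (↑s⁻¹ : A) := CFC.sqrt_mul_sqrt_self _ hsinv0
  have hm0 : 0 ≤ q * CFC.sqrt a * q := by
    have := star_left_conjugate_nonneg (CFC.sqrt_nonneg a) q
    rwa [(IsSelfAdjoint.of_nonneg hq0).star_eq] at this
  have hmsa : IsSelfAdjoint (q * CFC.sqrt a * q) := IsSelfAdjoint.of_nonneg hm0
  have hnorm_m : ‖q * CFC.sqrt a * q‖ ≤ 1 := by
    rw [← hmsa.toReal_spectralRadius_eq_norm]
    have hrad : spectralRadius ℝ (q * CFC.sqrt a * q) ≤ 1 := by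
      calc spectralRadius ℝ (q * CFC.sqrt a * q)
          = spectralRadius ℝ (q * (CFC.sqrt a * q)) := by rw [mul_assoc]
        _ = spectralRadius ℝ ((CFC.sqrt a * q) * q) := my_spectralRadius_mul_comm _ _
        _ = spectralRadius ℝ (CFC.sqrt a * (↑s⁻¹ : A)) := by rw [mul_assoc, hqq]
        _ ≤ (‖CFC.sqrt a * (↑s⁻¹ : A)‖₊ : ℝ≥0∞) := spectrum.spectralRadius_le_nnnorm _
        _ ≤ 1 := by
            rw [ENNReal.coe_le_one_iff, ← NNReal.coe_le_coe, coe_nnnorm]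
            simpa using key1
    calc (spectralRadius ℝ (q * CFC.sqrt a * q)).toReal
        ≤ (1 : ℝ≥0∞).toReal := ENNReal.toReal_mono ENNReal.one_ne_top hrad
      _ = 1 := by simp
  have hsq : ‖p * q‖ ^ 2 ≤ 1 := by
    have : ‖star (p * q) * (p * q)‖ = ‖p * q‖ * ‖p * q‖ := CStarRing.norm_star_mul_self
    have hst : star (p * q) * (p * q) = q * CFC.sqrt a * q := by
      rw [star_mul, (IsSelfAdjoint.of_nonneg hp0).star_eq, (IsSelfAdjoint.of_nonneg hq0).star_eq]
      calc q * p * (p * q) = q * (p * p) * q := by noncomm_ring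
        _ = q * CFC.sqrt a * q := by rw [hpp]
    rw [sq, ← this, hst]
    exact hnorm_m
  exact (sq_le_one_iff₀ (norm_nonneg _)).mp hsq



lemma my_cfc_sqrt_eq {b : A} (hb : 0 ≤ b) : CFC.sqrt b = cfc Real.sqrt b := by
  have hb' : IsSelfAdjoint b := .of_nonneg hb
  refine CFC.sqrt_unique ?_ (cfc_nonneg fun x _ => Real.sqrt_nonneg x)
  rw [← cfc_mul _ _ b (by fun_prop) (by fun_prop)]
  have h : Set.EqOn (fun x => Real.sqrt x * Real.sqrt x) (fun x => x) (spectrum ℝ b) :=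
    fun x hx => Real.mul_self_sqrt (spectrum_nonneg_of_nonneg hb hx)
  rw [cfc_congr h, cfc_id' ℝ b]

lemma my_sqrt_iter_eq_cfc {a : ℝ} (ha : 0 < a) {S : A} (hS : algebraMap ℝ A a ≤ S) (n : ℕ) :
    CFC.sqrt^[n] S = cfc (fun x : ℝ => x ^ ((2:ℝ)⁻¹ ^ n)) S := by
  have h1 : (0:A) ≤ algebraMap ℝ A a := by
    rw [Algebra.algebraMap_eq_smul_one]
    exact smul_nonneg ha.le zero_le_one
  have hS0 : 0 ≤ S := h1.trans hS
  have hSsa : IsSelfAdjoint S := .of_nonneg hS0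
  induction n with
  | zero => simp [Real.rpow_one, cfc_id' ℝ S]
  | succ n ih =>
    have hcont : ContinuousOn (fun x : ℝ => x ^ ((2:ℝ)⁻¹ ^ n)) (spectrum ℝ S) :=
      Continuous.continuousOn <| continuous_iff_continuousAt.mpr fun x =>
        Real.continuousAt_rpow_const x _ (Or.inr (by positivity))
    have hnn : 0 ≤ cfc (fun x : ℝ => x ^ ((2:ℝ)⁻¹ ^ n)) S :=
      cfc_nonneg fun x hx => Real.rpow_nonneg (spectrum_nonneg_of_nonneg hS0 hx) _
    rw [Function.iterate_succ_apply', ih, my_cfc_sqrt_eq hnn,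
      ← cfc_comp' Real.sqrt _ S (by fun_prop) hcont hSsa]
    refine cfc_congr fun x hx => ?_
    have hx0 : 0 ≤ x := spectrum_nonneg_of_nonneg hS0 hx
    rw [Real.sqrt_eq_rpow, ← Real.rpow_mul hx0, pow_succ]
    norm_num

lemma my_sqrt_iter_mono {a : ℝ} (ha : 0 < a) {S T : A} (hS : algebraMap ℝ A a ≤ S)
    (hST : S ≤ T) (n : ℕ) : CFC.sqrt^[n] S ≤ CFC.sqrt^[n] T := by
  have h1 : (0:A) ≤ algebraMap ℝ A a := by
    rw [Algebra.algebraMap_eq_smul_one]; exact smul_nonneg ha.le zero_le_one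
  have hT := hS.trans hST
  have hT0 : 0 ≤ T := h1.trans hT
  have hTsa : IsSelfAdjoint T := .of_nonneg hT0
  induction n with
  | zero => simpa
  | succ n ih =>
    rw [Function.iterate_succ_apply', Function.iterate_succ_apply']
    refine my_sqrt_le_sqrt ?_ ?_ ih
    · rw [my_sqrt_iter_eq_cfc ha hS n]
      exact cfc_nonneg fun x hx =>
        Real.rpow_nonneg (spectrum_nonneg_of_nonneg (h1.trans hS) hx) _
    · rw [my_sqrt_iter_eq_cfc ha hT n]
      have hcont : ContinuousOn (fun x : ℝ => x ^ ((2:ℝ)⁻¹ ^ n)) (spectrum ℝ T) :=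
        Continuous.continuousOn <| continuous_iff_continuousAt.mpr fun x =>
          Real.continuousAt_rpow_const x _ (Or.inr (by positivity))
      have halg : algebraMap ℝ A (a ^ ((2:ℝ)⁻¹ ^ n)) ≤ cfc (fun x : ℝ => x ^ ((2:ℝ)⁻¹ ^ n)) T := by
        refine algebraMap_le_cfc _ _ _ (fun x hx => ?_) hcont hTsa
        exact Real.rpow_le_rpow ha.le ((algebraMap_le_iff_le_spectrum hTsa).mp hT x hx)
          (by positivity)
      refine CStarAlgebra.isUnit_of_le _ halg (IsUnit.isStrictlyPositive ?_ ?_)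
      · exact (isUnit_iff_ne_zero.mpr (by positivity)).map (algebraMap ℝ A)
      · rw [Algebra.algebraMap_eq_smul_one]
        exact smul_nonneg (by positivity) zero_le_one

lemma my_cfc_log_mono {a : ℝ} (ha : 0 < a) {S T : A} (hS : algebraMap ℝ A a ≤ S)
    (hST : S ≤ T) : cfc Real.log S ≤ cfc Real.log T := by
  have h1 : (0:A) ≤ algebraMap ℝ A a := by
    rw [Algebra.algebraMap_eq_smul_one]; exact smul_nonneg ha.le zero_le_one
  set f : ℕ → ℝ → ℝ := fun n x => (2:ℝ)^n * (x ^ ((2:ℝ)⁻¹ ^ n) - 1) with hf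
  have hcont : ∀ n, Continuous fun x : ℝ => x ^ ((2:ℝ)⁻¹ ^ n) := fun n =>
    continuous_iff_continuousAt.mpr fun x =>
      Real.continuousAt_rpow_const x _ (Or.inr (by positivity))
  have hfc : ∀ n, Continuous (f n) := fun n =>
    continuous_const.mul ((hcont n).sub continuous_const)
  have hrep : ∀ (S : A), algebraMap ℝ A a ≤ S → ∀ n,
      cfc (f n) S = (2:ℝ)^n • (CFC.sqrt^[n] S - 1) := by
    intro S hS n
    have hSsa : IsSelfAdjoint S := .of_nonneg (h1.trans hS)
    rw [my_sqrt_iter_eq_cfc ha hS n, hf]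
    rw [cfc_const_mul _ (fun x : ℝ => x ^ ((2:ℝ)⁻¹ ^ n) - 1) _ ((hcont n).sub continuous_const).continuousOn,
      cfc_sub _ _ S (hcont n).continuousOn continuousOn_const,
      cfc_const 1 S hSsa, map_one]
  have hmono : ∀ n, cfc (f n) S ≤ cfc (f n) T := by
    intro n
    rw [hrep S hS n, hrep T (hS.trans hST) n, ← sub_nonneg, ← smul_sub]
    have h2 : (CFC.sqrt^[n] T - 1) - (CFC.sqrt^[n] S - 1)
        = CFC.sqrt^[n] T - CFC.sqrt^[n] S := by abel
    rw [h2]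
    exact smul_nonneg (by positivity) (sub_nonneg.mpr (my_sqrt_iter_mono ha hS hST n))
  have h2pow : Filter.Tendsto (fun n : ℕ => (2:ℝ)⁻¹^n) Filter.atTop (nhds 0) :=
    tendsto_pow_atTop_nhds_zero_of_lt_one (by norm_num) (by norm_num)
  have hconv : ∀ (S : A), algebraMap ℝ A a ≤ S →
      Filter.Tendsto (fun n => cfc (f n) S) Filter.atTop (nhds (cfc Real.log S)) := by
    intro S hS
    have hSsa : IsSelfAdjoint S := .of_nonneg (h1.trans hS)
    have hspec : ∀ x ∈ spectrum ℝ S, a ≤ x := (algebraMap_le_iff_le_spectrum hSsa).mp hS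
    have hlogc : ContinuousOn Real.log (spectrum ℝ S) := by
      refine Real.continuousOn_log.mono fun x hx => ?_
      simpa using (ha.trans_le (hspec x hx)).ne'
    set C : ℝ := max |Real.log a| |Real.log ‖S‖| + 1 with hC
    have hC0 : 0 < C := by positivity
    have hbound : ∀ x ∈ spectrum ℝ S, |Real.log x| ≤ C := by
      intro x hx
      have hax : a ≤ x := hspec x hx
      have hx0 : 0 < x := ha.trans_le hax
      have hxM : x ≤ ‖S‖ := (le_abs_self x).trans (spectrum.norm_le_norm_of_mem hx)
      have hl1 : Real.log a ≤ Real.log x := Real.log_le_log ha hax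
      have hl2 : Real.log x ≤ Real.log ‖S‖ := Real.log_le_log hx0 hxM
      calc |Real.log x| ≤ max |Real.log a| |Real.log ‖S‖| := abs_le_max_abs_abs hl1 hl2
        _ ≤ C := by rw [hC]; linarith
    rw [← tendsto_sub_nhds_zero_iff]
    have hev : ∀ᶠ n : ℕ in Filter.atTop, (2:ℝ)⁻¹^n * C ≤ 1 := by
      have h3 : Filter.Tendsto (fun n : ℕ => (2:ℝ)⁻¹^n * C) Filter.atTop (nhds 0) := by
        simpa using h2pow.mul_const C
      exact (h3.eventually_lt_const (by norm_num : (0:ℝ) < 1)).mono fun n hn => hn.le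
    refine squeeze_zero_norm' (a := fun n : ℕ => C^2 * (2:ℝ)⁻¹^n) ?_ ?_
    · filter_upwards [hev] with n hn
      rw [← cfc_sub (f n) Real.log S (hfc n).continuousOn hlogc]
      refine norm_cfc_le (by positivity) fun x hx => ?_
      have hx0 : 0 < x := ha.trans_le (hspec x hx)
      set t : ℝ := (2:ℝ)⁻¹^n with htdef
      have ht0 : 0 < t := by positivity
      set y : ℝ := Real.log x with hydef
      have hyC : |y| ≤ C := hbound x hx
      have hxt : x ^ t = Real.exp (y * t) := Real.rpow_def_of_pos hx0 t
      have h2n : (2:ℝ)^n = t⁻¹ := by rw [htdef, inv_pow, inv_inv]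
      have hyt1 : |y * t| ≤ 1 := by
        rw [abs_mul, abs_of_pos ht0]
        calc |y| * t ≤ C * t := mul_le_mul_of_nonneg_right hyC ht0.le
          _ = t * C := mul_comm _ _
          _ ≤ 1 := hn
      have key := Real.abs_exp_sub_one_sub_id_le hyt1
      have heq : f n x - Real.log x = t⁻¹ * (Real.exp (y*t) - 1 - y*t) := by
        rw [hf]; simp only
        rw [hxt, h2n, ← hydef]
        field_simp
      rw [Real.norm_eq_abs, heq, abs_mul, abs_of_pos (inv_pos.mpr ht0)]
      have hy2 : y^2 ≤ C^2 := by
        rw [← sq_abs y]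
        exact pow_le_pow_left₀ (abs_nonneg _) hyC 2
      calc t⁻¹ * |Real.exp (y*t) - 1 - y*t| ≤ t⁻¹ * (y*t)^2 :=
            mul_le_mul_of_nonneg_left key (inv_pos.mpr ht0).le
        _ = y^2 * t := by field_simp
        _ ≤ C^2 * t := mul_le_mul_of_nonneg_right hy2 ht0.le
    · simpa using h2pow.const_mul (C^2)
  have hdiff := (hconv T (hS.trans hST)).sub (hconv S hS)
  have hmem := (CStarAlgebra.isClosed_nonneg (A := A)).mem_of_tendsto hdiff
    (Filter.Eventually.of_forall fun n => sub_nonneg.mpr (hmono n))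
  rw [← sub_nonneg]
  exact hmem

end CStar

/-- If `a•I ≤ S ≤ T` with `a > 0`, then `log S` and `log T` (via
continuous functional calculus) are bounded self-adjoint operators and `log S ≤ log T`
(operator monotonicity of the logarithm). -/
theorem log_operator_monotone
    (X : Type*) [NormedAddCommGroup X] [InnerProductSpace ℂ X] [CompleteSpace X]
    (S T : X →L[ℂ] X) (hS : IsSelfAdjoint S) (hT : IsSelfAdjoint T)
    (a : ℝ) (ha : 0 < a)
    (haS : (S - a • (1 : X →L[ℂ] X)).IsPositive)
    (hST : (T - S).IsPositive) :
    IsSelfAdjoint (cfc Real.log S) ∧ IsSelfAdjoint (cfc Real.log T) ∧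
      (cfc Real.log T - cfc Real.log S).IsPositive := by
  refine ⟨cfc_predicate Real.log S, cfc_predicate Real.log T, ?_⟩
  rcases subsingleton_or_nontrivial (X →L[ℂ] X) with h | h
  · rw [← ContinuousLinearMap.nonneg_iff_isPositive]
    exact le_of_eq (Subsingleton.elim _ _)
  · rw [← ContinuousLinearMap.nonneg_iff_isPositive, sub_nonneg]
    refine my_cfc_log_mono ha ?_ ?_
    · rw [ContinuousLinearMap.le_def, Algebra.algebraMap_eq_smul_one]
      exact haS
    · rw [ContinuousLinearMap.le_def]
      exact hST
end

section
/- Let M be a positive bounded self-adjoint operator on a Hilbert space X with aI ≤ M for some a > 0, and let x ∈ X with ‖x‖ = 1. Then ⟨(log M)x, x⟩ ≤ log⟨Mx, x⟩. -/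
/-- Operator Jensen inequality for the logarithm: if `a•I ≤ M` for some
`a > 0` and `‖x‖ = 1`, then `⟨(log M) x, x⟩ ≤ log ⟨M x, x⟩`. -/
theorem inner_log_le_log_inner
    (X : Type*) [NormedAddCommGroup X] [InnerProductSpace ℂ X] [CompleteSpace X]
    (M : X →L[ℂ] X) (hM : IsSelfAdjoint M)
    (a : ℝ) (ha : 0 < a) (haM : (M - a • (1 : X →L[ℂ] X)).IsPositive)
    (x : X) (hx : ‖x‖ = 1) :
    (cfc Real.log M).reApplyInnerSelf x ≤ Real.log (M.reApplyInnerSelf x) := by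
  set s : ℝ := M.reApplyInnerSelf x with hs
  -- a • 1 ≤ M
  have hle : algebraMap ℝ (X →L[ℂ] X) a ≤ M := by
    rw [Algebra.algebraMap_eq_smul_one, ContinuousLinearMap.le_def]
    simpa using haM
  -- spectrum is ⊆ [a, ∞)
  have hspec : ∀ t ∈ spectrum ℝ M, a ≤ t :=
    (algebraMap_le_iff_le_spectrum (R := ℝ) (a := M) hM).mp hle
  -- a ≤ s
  have has : a ≤ s := by
    have h0 := haM.inner_nonneg_left x
    have : M.reApplyInnerSelf x - a * ‖x‖ ^ 2 = RCLike.re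
        (inner ℂ ((M - a • (1 : X →L[ℂ] X)) x) x : ℂ) := by
      simp [ContinuousLinearMap.reApplyInnerSelf, inner_sub_left, ← algebraMap_smul ℂ,
        Complex.coe_algebraMap, inner_smul_left, mul_comm, ← inner_self_eq_norm_sq (𝕜 := ℂ)]
    rw [hx] at this
    simp only [one_pow, mul_one] at this
    linarith [this ▸ (RCLike.nonneg_iff.mp h0).1]
  have hs0 : 0 < s := lt_of_lt_of_le ha has
  -- the tangent-line comparison under cfc
  have hmono : cfc Real.log M ≤ cfc (fun t : ℝ => (Real.log s - 1) + s⁻¹ * t) M := by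
    apply cfc_mono
    · intro t ht
      have hta : a ≤ t := hspec t ht
      have ht0 : 0 < t := lt_of_lt_of_le ha hta
      have hdiv : 0 < t / s := div_pos ht0 hs0
      have key := Real.log_le_sub_one_of_pos hdiv
      rw [Real.log_div (ne_of_gt ht0) (ne_of_gt hs0)] at key
      have : t / s = s⁻¹ * t := by field_simp
      linarith [this ▸ key]
    · exact Real.continuousOn_log.mono fun t ht => by
        simpa using ne_of_gt (ha.trans_le (hspec t ht))
    · exact (continuousOn_const.add (continuousOn_const.mul continuousOn_id))
  -- compute the cfc of the affine function
  have haff : cfc (fun t : ℝ => (Real.log s - 1) + s⁻¹ * t) M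
      = algebraMap ℝ (X →L[ℂ] X) (Real.log s - 1) + s⁻¹ • M := by
    rw [cfc_const_add _ _ _ (by fun_prop) hM, cfc_const_mul_id _ _ hM]
  rw [haff] at hmono
  -- pass to the quadratic form
  have smul_re : ∀ (r : ℝ) (y : X), RCLike.re (inner ℂ (r • y) x : ℂ)
      = r * RCLike.re (inner ℂ y x : ℂ) := by
    intro r y
    rw [← algebraMap_smul ℂ r y, Complex.coe_algebraMap, inner_smul_left]
    simp
  have hineq : (cfc Real.log M).reApplyInnerSelf x
      ≤ (algebraMap ℝ (X →L[ℂ] X) (Real.log s - 1) + s⁻¹ • M).reApplyInnerSelf x := by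
    rw [ContinuousLinearMap.le_def] at hmono
    have h0 := hmono.inner_nonneg_left x
    have heq : (algebraMap ℝ (X →L[ℂ] X) (Real.log s - 1) + s⁻¹ • M).reApplyInnerSelf x
        - (cfc Real.log M).reApplyInnerSelf x
        = RCLike.re (inner ℂ (((algebraMap ℝ (X →L[ℂ] X) (Real.log s - 1) + s⁻¹ • M)
          - cfc Real.log M) x) x : ℂ) := by
      simp only [ContinuousLinearMap.reApplyInnerSelf, ContinuousLinearMap.sub_apply,
        inner_sub_left, map_sub]
    linarith [heq ▸ (RCLike.nonneg_iff.mp h0).1]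
  refine hineq.trans_eq ?_
  have key : (algebraMap ℝ (X →L[ℂ] X) (Real.log s - 1) + s⁻¹ • M).reApplyInnerSelf x
      = (Real.log s - 1) + s⁻¹ * s := by
    simp only [ContinuousLinearMap.reApplyInnerSelf, ContinuousLinearMap.add_apply,
      Algebra.algebraMap_eq_smul_one, ContinuousLinearMap.smul_apply,
      ContinuousLinearMap.one_apply, inner_add_left, map_add, smul_re]
    rw [inner_self_eq_norm_sq, hx]
    simp [hs, ContinuousLinearMap.reApplyInnerSelf]
  rw [key, inv_mul_cancel₀ (ne_of_gt hs0)]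
  ring
end
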